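/- Let x_1, …, x_N ∈ ℝ^d with N ≥ 1 and β > 0, and define the Hopfield energy E(ξ) = ½·⟨ξ, ξ⟩ − β⁻¹·log(∑_{i=1}^N exp(β·⟨x_i, ξ⟩)). Then for every ξ ∈ ℝ^d, the updated state ξ' = ∑_{i=1}^N softmax(β·Xᵀξ)_i · x_i satisfies E(ξ') ≤ E(ξ); i.e., the Hopfield update rule never increases the energy. -/

import Mathlib

open scoped RealInnerProductSpace

/-- The Hopfield update rule never increases the energy
`E(ξ) = ½·⟨ξ,ξ⟩ − β⁻¹·log(∑ᵢ exp(β·⟨xᵢ,ξ⟩))`: for every `ξ`, the updated state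
`ξ' = ∑ᵢ softmax(β·Xᵀξ)ᵢ • xᵢ` satisfies `E(ξ') ≤ E(ξ)`. -/
theorem hopfield_update_energy_descent
    (N d : ℕ) (hN : 1 ≤ N) (β : ℝ) (hβ : 0 < β)
    (x : Fin N → EuclideanSpace ℝ (Fin d))
    (E : EuclideanSpace ℝ (Fin d) → ℝ)
    (hE : E = fun ξ =>
      (1 / 2) * ⟪ξ, ξ⟫ - β⁻¹ * Real.log (∑ i, Real.exp (β * ⟪x i, ξ⟫))) :
    ∀ ξ : EuclideanSpace ℝ (Fin d),
      E (∑ i, (Real.exp (β * ⟪x i, ξ⟫) /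
          ∑ m, Real.exp (β * ⟪x m, ξ⟫)) • x i) ≤ E ξ := by
  intro ξ
  classical
  have hne : (Finset.univ : Finset (Fin N)).Nonempty := ⟨⟨0, hN⟩, Finset.mem_univ _⟩
  set S : ℝ := ∑ m, Real.exp (β * ⟪x m, ξ⟫) with hS
  have hSpos : 0 < S := Finset.sum_pos (fun i _ => Real.exp_pos _) hne
  set p : Fin N → ℝ := fun i => Real.exp (β * ⟪x i, ξ⟫) / S with hp
  have hppos : ∀ i, 0 < p i := fun i => div_pos (Real.exp_pos _) hSpos
  have hpsum : ∑ i, p i = 1 := by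
    rw [hp, ← Finset.sum_div, ← hS, div_self (ne_of_gt hSpos)]
  set ξ' : EuclideanSpace ℝ (Fin d) := ∑ i, p i • x i with hξ'
  -- inner products with ξ'
  have hinner : ∀ v : EuclideanSpace ℝ (Fin d), ⟪ξ', v⟫ = ∑ i, p i * ⟪x i, v⟫ := by
    intro v
    rw [hξ', sum_inner]
    exact Finset.sum_congr rfl fun i _ => real_inner_smul_left _ _ _
  have hlogp : ∀ i, Real.log (p i) = β * ⟪x i, ξ⟫ - Real.log S := by
    intro i
    rw [hp]
    rw [Real.log_div (Real.exp_ne_zero _) (ne_of_gt hSpos), Real.log_exp]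
  set S' : ℝ := ∑ i, Real.exp (β * ⟪x i, ξ'⟫) with hS'
  have hS'pos : 0 < S' := Finset.sum_pos (fun i _ => Real.exp_pos _) hne
  -- Jensen
  have hjensen : Real.exp (∑ i, p i * (β * ⟪x i, ξ'⟫ - Real.log (p i))) ≤
      ∑ i, p i * Real.exp (β * ⟪x i, ξ'⟫ - Real.log (p i)) := by
    exact (convexOn_exp.map_sum_le (fun i _ => (hppos i).le) hpsum
      (fun i _ => Set.mem_univ _))
  have hterm : ∀ i, p i * Real.exp (β * ⟪x i, ξ'⟫ - Real.log (p i)) =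
      Real.exp (β * ⟪x i, ξ'⟫) := by
    intro i
    rw [Real.exp_sub, Real.exp_log (hppos i)]
    field_simp
    exact div_self (ne_of_gt (hppos i))
  have hrhs : ∑ i, p i * Real.exp (β * ⟪x i, ξ'⟫ - Real.log (p i)) = S' := by
    rw [hS']; exact Finset.sum_congr rfl fun i _ => hterm i
  have hexponent : ∑ i, p i * (β * ⟪x i, ξ'⟫ - Real.log (p i)) =
      β * ⟪ξ', ξ'⟫ - β * ⟪ξ', ξ⟫ + Real.log S := by
    have h1 : ∑ i, p i * (β * ⟪x i, ξ'⟫ - Real.log (p i)) =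
        β * (∑ i, p i * ⟪x i, ξ'⟫) - β * (∑ i, p i * ⟪x i, ξ⟫)
          + (∑ i, p i) * Real.log S := by
      rw [Finset.mul_sum, Finset.mul_sum, Finset.sum_mul, ← Finset.sum_sub_distrib,
        ← Finset.sum_add_distrib]
      refine Finset.sum_congr rfl fun i _ => ?_
      rw [hlogp i]; ring
    rw [h1, hpsum, ← hinner, ← hinner]; ring
  have hkey : β * ⟪ξ', ξ'⟫ - β * ⟪ξ', ξ⟫ + Real.log S ≤ Real.log S' := by
    have hle : Real.exp (β * ⟪ξ', ξ'⟫ - β * ⟪ξ', ξ⟫ + Real.log S) ≤ S' := by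
      rw [← hexponent, ← hrhs]; exact hjensen
    calc β * ⟪ξ', ξ'⟫ - β * ⟪ξ', ξ⟫ + Real.log S
        = Real.log (Real.exp (β * ⟪ξ', ξ'⟫ - β * ⟪ξ', ξ⟫ + Real.log S)) := by
          rw [Real.log_exp]
      _ ≤ Real.log S' := Real.log_le_log (Real.exp_pos _) hle
  -- finish
  have hsq : 0 ≤ ⟪ξ' - ξ, ξ' - ξ⟫ := real_inner_self_nonneg
  have hexpand : ⟪ξ' - ξ, ξ' - ξ⟫ = ⟪ξ', ξ'⟫ - 2 * ⟪ξ', ξ⟫ + ⟪ξ, ξ⟫ := by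
    rw [inner_sub_sub_self, real_inner_comm ξ ξ']; ring
  rw [hE]
  simp only
  rw [← hS']
  have hβinv : 0 < β⁻¹ := inv_pos.mpr hβ
  have h2 : β⁻¹ * (β * ⟪ξ', ξ'⟫ - β * ⟪ξ', ξ⟫ + Real.log S) ≤ β⁻¹ * Real.log S' :=
    mul_le_mul_of_nonneg_left hkey hβinv.le
  have hβne : β ≠ 0 := ne_of_gt hβ
  have h3 : β⁻¹ * (β * ⟪ξ', ξ'⟫ - β * ⟪ξ', ξ⟫ + Real.log S)
      = ⟪ξ', ξ'⟫ - ⟪ξ', ξ⟫ + β⁻¹ * Real.log S := by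
    field_simp
  linarith [hsq, hexpand, h2, h3]
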